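/- Let n ≥ 2 and r ≥ 3, and let N_{n,r} be the free nilpotent group of rank n and step r with free generating family X = (x_1, …, x_n). Then 2(n−1) ≤ pw(N_{n,r}, X) ≤ 3n. -/

import Mathlib

/-- The element of `G` represented by a word in the alphabet `X^{±1}`:
a letter `(i, true)` stands for `X i` and `(i, false)` for `(X i)⁻¹`. -/
def evalWord {G : Type*} {n : ℕ} [Group G] (X : Fin n → G) (w : List (Fin n × Bool)) : G :=
  (w.map fun l => if l.2 then X l.1 else (X l.1)⁻¹).prod

/-- `g` is a palindrome with respect to the generating family `X` if it is represented by
some word whose sequence of letters equals its reverse. -/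
def IsPalindrome {G : Type*} {n : ℕ} [Group G] (X : Fin n → G) (g : G) : Prop :=
  ∃ w : List (Fin n × Bool), w.reverse = w ∧ evalWord X w = g

/-- `g` is a product of `k` palindromes with respect to `X`. -/
def IsPalProd {G : Type*} {n : ℕ} [Group G] (X : Fin n → G) (k : ℕ) (g : G) : Prop :=
  ∃ f : Fin k → G, (∀ i, IsPalindrome X (f i)) ∧ (List.ofFn f).prod = g

/-- The palindromic length of `g` with respect to `X`, valued in `ℕ∞`. -/
noncomputable def palLength {G : Type*} {n : ℕ} [Group G] (X : Fin n → G) (g : G) : ℕ∞ :=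
  sInf {k : ℕ∞ | ∃ m : ℕ, k = (m : ℕ∞) ∧ IsPalProd X m g}

/-- The palindromic width of `G` with respect to `X`, valued in `ℕ∞`. -/
noncomputable def palWidth {G : Type*} {n : ℕ} [Group G] (X : Fin n → G) : ℕ∞ :=
  ⨆ g : G, palLength X g

open scoped commutatorElement

local notation:max "lcsT " G:max => Subgroup.lowerCentralSeries (⊤ : Subgroup G)

section Words
variable {G H : Type*} {n : ℕ} [Group G] [Group H] (X : Fin n → G)

theorem evalWord_nil : evalWord X [] = 1 := rfl

theorem evalWord_cons (l : Fin n × Bool) (w : List (Fin n × Bool)) :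
    evalWord X (l :: w) = (if l.2 then X l.1 else (X l.1)⁻¹) * evalWord X w := by
  simp [evalWord]

theorem evalWord_append (w₁ w₂ : List (Fin n × Bool)) :
    evalWord X (w₁ ++ w₂) = evalWord X w₁ * evalWord X w₂ := by
  simp [evalWord]

theorem evalWord_singleton (l : Fin n × Bool) :
    evalWord X [l] = (if l.2 then X l.1 else (X l.1)⁻¹) := by
  simp [evalWord]

/-- flip a letter -/
def negL {n : ℕ} (l : Fin n × Bool) : Fin n × Bool := (l.1, !l.2)

theorem evalWord_negL_reverse (w : List (Fin n × Bool)) :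
    evalWord X ((w.map negL).reverse) = (evalWord X w)⁻¹ := by
  induction w with
  | nil => simp [evalWord]
  | cons l t ih =>
    rw [List.map_cons, List.reverse_cons, evalWord_append, ih, evalWord_cons,
      evalWord_nil, mul_one, evalWord_cons, mul_inv_rev]
    congr 1
    cases l with
    | mk i b => cases b <;> simp [negL]

theorem evalWord_hom (φ : G →* H) (w : List (Fin n × Bool)) :
    φ (evalWord X w) = evalWord (fun i => φ (X i)) w := by
  induction w with
  | nil => simp [evalWord]
  | cons l t ih =>
    rw [evalWord_cons, map_mul, ih, evalWord_cons]
    congr 1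
    cases l with
    | mk i b => cases b <;> simp

theorem IsPalindrome.map {X : Fin n → G} {g : G} (h : IsPalindrome X g) (φ : G →* H) :
    IsPalindrome (fun i => φ (X i)) (φ g) := by
  obtain ⟨w, hw, hev⟩ := h
  exact ⟨w, hw, by rw [← evalWord_hom, hev]⟩

theorem IsPalProd.map {X : Fin n → G} {k : ℕ} {g : G} (h : IsPalProd X k g) (φ : G →* H) :
    IsPalProd (fun i => φ (X i)) k (φ g) := by
  obtain ⟨f, hf, hprod⟩ := h
  refine ⟨fun i => φ (f i), fun i => (hf i).map φ, ?_⟩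
  rw [← hprod]
  calc (List.ofFn fun i => φ (f i)).prod = ((List.ofFn f).map φ).prod := by
        rw [List.map_ofFn]; rfl
    _ = φ (List.ofFn f).prod := (map_list_prod φ _).symm

/-- every palindromic list splits as `v ++ m ++ v.reverse` with `m` of length ≤ 1 -/
theorem pal_decomp {α : Type*} :
    ∀ (N : ℕ) (w : List α), w.length ≤ N → w.reverse = w →
      ∃ (v m : List α), m.length ≤ 1 ∧ w = v ++ (m ++ v.reverse) := by
  intro N
  induction N with
  | zero =>
    intro w hw _
    have : w = [] := List.length_eq_zero_iff.mp (Nat.le_zero.mp hw)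
    exact ⟨[], [], by simp, by simp [this]⟩
  | succ N ih =>
    intro w hw hrev
    rcases w with _ | ⟨a, s⟩
    · exact ⟨[], [], by simp, by simp⟩
    rcases eq_or_ne s [] with rfl | hne
    · exact ⟨[], [a], by simp, by simp⟩
    have h1 : s.reverse ++ [a] = a :: s := by simpa using hrev
    obtain ⟨u, c, huc⟩ : ∃ u c, s = u ++ [c] :=
      ⟨s.dropLast, s.getLast hne, (List.dropLast_append_getLast hne).symm⟩
    rw [huc, List.reverse_append] at h1
    simp only [List.reverse_singleton, List.singleton_append, List.cons_append] at h1
    have hca : c = a := (List.cons_eq_cons.mp h1).1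
    have h2 : u.reverse ++ [a] = u ++ [c] := by
      have := (List.cons_eq_cons.mp h1).2
      simpa using this
    have hu : u.reverse = u := by
      rw [hca] at h2
      exact List.append_cancel_right h2
    have hlen : u.length ≤ N := by
      have hs : s.length = u.length + 1 := by simp [huc]
      have hws : (a :: s).length = s.length + 1 := by simp
      have := hw
      rw [hws, hs] at this
      omega
    obtain ⟨v, m, hm, huvm⟩ := ih u hlen hu
    refine ⟨a :: v, m, hm, ?_⟩
    have hsa : s = u ++ [a] := by rw [huc, hca]
    rw [hsa, huvm]
    simp [List.reverse_cons, List.append_assoc]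

theorem isPalindrome_decomp {X : Fin n → G} {g : G} (h : IsPalindrome X g) :
    ∃ (v m : List (Fin n × Bool)), m.length ≤ 1 ∧
      g = evalWord X v * evalWord X m * evalWord X v.reverse := by
  obtain ⟨w, hw, hev⟩ := h
  obtain ⟨v, m, hm, rfl⟩ := pal_decomp w.length w le_rfl hw
  refine ⟨v, m, hm, ?_⟩
  rw [← hev, evalWord_append, evalWord_append, mul_assoc]

theorem isPalindrome_sandwich (u : List (Fin n × Bool)) (m : List (Fin n × Bool))
    (hm : m.reverse = m) :
    IsPalindrome X (evalWord X (u ++ (m ++ u.reverse))) := by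
  refine ⟨u ++ (m ++ u.reverse), ?_, rfl⟩
  simp [List.reverse_append, hm, ← List.append_assoc]

theorem isPalindrome_zpow (i : Fin n) (m : ℤ) : IsPalindrome X (X i ^ m) := by
  rcases le_or_gt 0 m with hm | hm
  · refine ⟨List.replicate m.toNat (i, true), List.reverse_replicate, ?_⟩
    simp only [evalWord, List.map_replicate, if_pos, List.prod_replicate]
    rw [← zpow_natCast]
    congr 1
    omega
  · refine ⟨List.replicate (-m).toNat (i, false), List.reverse_replicate, ?_⟩
    have h : (if (false : Bool) = true then X i else (X i)⁻¹) = (X i)⁻¹ := by simp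
    simp only [evalWord, List.map_replicate]
    rw [h, List.prod_replicate, inv_pow, ← zpow_natCast, ← zpow_neg]
    congr 1
    omega

theorem isPalindrome_one : IsPalindrome X (1 : G) := ⟨[], by simp, rfl⟩

end Words

section PalProd
variable {G : Type*} {n : ℕ} [Group G] (X : Fin n → G)

theorem isPalProd_iff_list {k : ℕ} {g : G} :
    IsPalProd X k g ↔ ∃ l : List G, l.length = k ∧ (∀ p ∈ l, IsPalindrome X p) ∧ l.prod = g := by
  constructor
  · rintro ⟨f, hf, hprod⟩
    refine ⟨List.ofFn f, List.length_ofFn, ?_, hprod⟩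
    intro p hp
    obtain ⟨i, rfl⟩ := List.mem_ofFn.mp hp
    exact hf i
  · rintro ⟨l, rfl, hl, hprod⟩
    exact ⟨l.get, fun i => hl _ (l.get_mem i), by rw [List.ofFn_get]; exact hprod⟩

theorem IsPalProd.mul {k k' : ℕ} {g g' : G} (h : IsPalProd X k g) (h' : IsPalProd X k' g') :
    IsPalProd X (k + k') (g * g') := by
  rw [isPalProd_iff_list] at h h' ⊢
  obtain ⟨l, rfl, hl, rfl⟩ := h
  obtain ⟨l', rfl, hl', rfl⟩ := h'
  refine ⟨l ++ l', by simp, ?_, by simp⟩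
  intro p hp
  rcases List.mem_append.mp hp with h | h
  exacts [hl p h, hl' p h]

theorem isPalProd_of_list_three {l : List G} (c : ℕ)
    (hl : ∀ p ∈ l, IsPalProd X c p) : IsPalProd X (c * l.length) l.prod := by
  induction l with
  | nil => exact ⟨fun i => 1, fun i => isPalindrome_one X, by simp⟩
  | cons a t ih =>
    have h1 : IsPalProd X c a := hl a (List.mem_cons_self)
    have h2 : IsPalProd X (c * t.length) t.prod := ih fun p hp => hl p (List.mem_cons_of_mem a hp)
    have := h1.mul X h2
    have harith : c + c * t.length = c * (a :: t).length := by
      simp [List.length_cons]; ring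
    rw [harith] at this
    simpa using this

theorem palLength_le {k : ℕ} {g : G} (h : IsPalProd X k g) : palLength X g ≤ (k : ℕ∞) :=
  sInf_le ⟨k, rfl, h⟩

theorem le_palLength {C : ℕ} {g : G} (h : ∀ k, IsPalProd X k g → C ≤ k) :
    (C : ℕ∞) ≤ palLength X g := by
  refine le_sInf ?_
  rintro b ⟨m, rfl, hm⟩
  exact_mod_cast h m hm

theorem palLength_le_palWidth (g : G) : palLength X g ≤ palWidth X := le_iSup _ g

end PalProd

section Merge
variable {G : Type*} [Group G]

theorem prod_ofFn_ones : ∀ (m : ℕ), (List.ofFn fun _ : Fin m => (1 : G)).prod = 1 := by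
  intro m
  induction m with
  | zero => simp
  | succ m ih => rw [List.ofFn_succ]; simpa using ih

/-- merge two ofFn-products when the second family is central -/
theorem prod_ofFn_mul_central : ∀ (m : ℕ) (A B : Fin m → G),
    (∀ i, B i ∈ Subgroup.center G) →
    (List.ofFn A).prod * (List.ofFn B).prod = (List.ofFn fun i => A i * B i).prod := by
  intro m
  induction m with
  | zero => simp
  | succ m ih =>
    intro A B hB
    rw [List.ofFn_succ, List.ofFn_succ, List.ofFn_succ, List.prod_cons, List.prod_cons,
      List.prod_cons]
    have hcomm : (List.ofFn fun i : Fin m => A i.succ).prod * B 0 =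
        B 0 * (List.ofFn fun i : Fin m => A i.succ).prod :=
      (Subgroup.mem_center_iff.mp (hB 0)) _
    calc A 0 * (List.ofFn fun i : Fin m => A i.succ).prod *
          (B 0 * (List.ofFn fun i : Fin m => B i.succ).prod)
        = A 0 * ((List.ofFn fun i : Fin m => A i.succ).prod * B 0) *
          (List.ofFn fun i : Fin m => B i.succ).prod := by group
      _ = A 0 * (B 0 * (List.ofFn fun i : Fin m => A i.succ).prod) *
          (List.ofFn fun i : Fin m => B i.succ).prod := by rw [hcomm]
      _ = (A 0 * B 0) * ((List.ofFn fun i : Fin m => A i.succ).prod *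
          (List.ofFn fun i : Fin m => B i.succ).prod) := by group
      _ = (A 0 * B 0) * (List.ofFn fun i : Fin m => A i.succ * B i.succ).prod := by
          rw [ih _ _ fun i => hB i.succ]

theorem prod_ofFn_inv_central : ∀ (m : ℕ) (A : Fin m → G),
    (∀ i, A i ∈ Subgroup.center G) →
    ((List.ofFn A).prod)⁻¹ = (List.ofFn fun i => (A i)⁻¹).prod := by
  intro m
  induction m with
  | zero => simp
  | succ m ih =>
    intro A hA
    rw [List.ofFn_succ, List.ofFn_succ, List.prod_cons, List.prod_cons, mul_inv_rev,
      ← ih _ fun i => hA i.succ]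
    exact Subgroup.mem_center_iff.mp ((Subgroup.center G).inv_mem (hA 0)) _

theorem prod_ofFn_single : ∀ (m : ℕ) (j : Fin m) (g : G),
    (List.ofFn fun i => if i = j then g else 1).prod = g := by
  intro m
  induction m with
  | zero => exact fun j => j.elim0
  | succ m ih =>
    intro j g
    rcases Fin.eq_zero_or_eq_succ j with rfl | ⟨j', rfl⟩
    · rw [List.ofFn_succ, List.prod_cons]
      have h1 : (fun i : Fin m => if i.succ = (0 : Fin (m+1)) then g else 1) =
          fun _ : Fin m => (1 : G) := by
        funext i
        simp [Fin.succ_ne_zero]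
      rw [h1, prod_ofFn_ones, mul_one, if_pos rfl]
    · rw [List.ofFn_succ, List.prod_cons]
      have h0 : ((0 : Fin (m+1)) = j'.succ) = False := by
        simp [(Fin.succ_ne_zero j').symm]
      simp only [h0, if_false]
      have : (fun i : Fin m => if i.succ = j'.succ then g else 1) =
          fun i : Fin m => if i = j' then g else 1 := by
        funext i
        simp [Fin.succ_inj]
      rw [this, ih j' g, one_mul]

end Merge

section CommId
variable {G : Type*} [Group G]

theorem lcs_succ_comm (k : ℕ) :
    lcsT G (k+1) = ⁅lcsT G k, (⊤ : Subgroup G)⁆ := rfl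

theorem comm_mul_central (a b y : G) (h : ⁅a, y⁆ ∈ Subgroup.center G) :
    ⁅b * a, y⁆ = ⁅a, y⁆ * ⁅b, y⁆ := by
  have hc := Subgroup.mem_center_iff.mp h
  calc ⁅b * a, y⁆ = b * ⁅a, y⁆ * (y * b⁻¹ * y⁻¹) := by
        simp only [commutatorElement_def]; group
    _ = ⁅a, y⁆ * b * (y * b⁻¹ * y⁻¹) := by rw [hc b]
    _ = ⁅a, y⁆ * ⁅b, y⁆ := by simp only [commutatorElement_def]; group

theorem comm_inv_central (a y : G) (h : ⁅a, y⁆ ∈ Subgroup.center G) :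
    ⁅a⁻¹, y⁆ = ⁅a, y⁆⁻¹ := by
  have h2 := comm_mul_central a a⁻¹ y h
  rw [inv_mul_cancel, commutatorElement_one_left] at h2
  exact (inv_eq_of_mul_eq_one_right h2.symm).symm

theorem comm_mul_right (a b c : G) : ⁅a, b * c⁆ = ⁅a, b⁆ * (b * ⁅a, c⁆ * b⁻¹) := by
  simp only [commutatorElement_def]; group

theorem comm_inv_right (a b : G) : ⁅a, b⁻¹⁆ = b⁻¹ * ⁅a, b⁆⁻¹ * b := by
  simp only [commutatorElement_def]; group

end CommId

section LCSlemmas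
variable {G H : Type*} [Group G] [Group H]

theorem map_lcs_eq (f : G →* H) (hf : Function.Surjective f) :
    ∀ k, (lcsT G k).map f = lcsT H k := by
  intro k
  induction k with
  | zero =>
    simp only [Subgroup.lowerCentralSeries_zero]
    exact Subgroup.map_top_of_surjective f hf
  | succ k ih =>
    rw [lcs_succ_comm, lcs_succ_comm, Subgroup.map_commutator, ih,
      Subgroup.map_top_of_surjective f hf]

theorem closure_range_comp {n : ℕ} (X : Fin n → G) (hX : Subgroup.closure (Set.range X) = ⊤)
    (f : G →* H) (hf : Function.Surjective f) :
    Subgroup.closure (Set.range fun i => f (X i)) = ⊤ := by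
  have : (Set.range fun i => f (X i)) = f '' Set.range X := by
    rw [← Set.range_comp]; rfl
  rw [this, ← MonoidHom.map_closure, hX]
  exact Subgroup.map_top_of_surjective f hf

end LCSlemmas

section LemmaB
variable {G : Type*} [Group G] {n : ℕ}

theorem comm_central_of_lcs {m : ℕ} (hc : lcsT G (m+1) ≤ Subgroup.center G)
    {a : G} (y : G) (ha : a ∈ lcsT G m) : ⁅a, y⁆ ∈ Subgroup.center G := by
  apply hc
  rw [lcs_succ_comm]
  exact Subgroup.commutator_mem_commutator ha (Subgroup.mem_top y)

theorem lemmaB (X : Fin n → G) (hX : Subgroup.closure (Set.range X) = ⊤)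
    (m : ℕ) (hc : lcsT G (m+1) ≤ Subgroup.center G) :
    ∀ z ∈ lcsT G (m+1), ∃ v : Fin n → G,
      (∀ i, v i ∈ lcsT G m) ∧ z = (List.ofFn fun i => ⁅v i, X i⁆).prod := by
  set T : Subgroup G :=
    { carrier := {z | ∃ v : Fin n → G,
        (∀ i, v i ∈ lcsT G m) ∧ z = (List.ofFn fun i => ⁅v i, X i⁆).prod}
      one_mem' := by
        refine ⟨fun _ => 1, fun i => Subgroup.one_mem _, ?_⟩
        have : (fun i => ⁅(1 : G), X i⁆) = fun _ : Fin n => (1 : G) := by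
          funext i; exact commutatorElement_one_left (X i)
        rw [this, prod_ofFn_ones]
      mul_mem' := by
        rintro a b ⟨v, hv, rfl⟩ ⟨v', hv', rfl⟩
        refine ⟨fun i => v' i * v i, fun i =>
          (lcsT G m).mul_mem (hv' i) (hv i), ?_⟩
        show _ = (List.ofFn fun i => ⁅v' i * v i, X i⁆).prod
        have hfun : (fun i => ⁅v' i * v i, X i⁆) =
            fun i => ⁅v i, X i⁆ * ⁅v' i, X i⁆ := by
          funext i
          exact comm_mul_central (v i) (v' i) (X i) (comm_central_of_lcs hc (X i) (hv i))
        rw [hfun]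
        exact prod_ofFn_mul_central n _ _ fun i => comm_central_of_lcs hc (X i) (hv' i)
      inv_mem' := by
        rintro a ⟨v, hv, rfl⟩
        refine ⟨fun i => (v i)⁻¹, fun i => (lcsT G m).inv_mem (hv i), ?_⟩
        show _ = (List.ofFn fun i => ⁅(v i)⁻¹, X i⁆).prod
        have hfun : (fun i => ⁅(v i)⁻¹, X i⁆) = fun i => ⁅v i, X i⁆⁻¹ := by
          funext i
          exact comm_inv_central (v i) (X i) (comm_central_of_lcs hc (X i) (hv i))
        rw [hfun]
        exact prod_ofFn_inv_central n _ fun i => comm_central_of_lcs hc (X i) (hv i) } with hT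
  have hTc : ∀ z ∈ T, z ∈ Subgroup.center G := by
    rintro z ⟨v, hv, rfl⟩
    refine Subgroup.list_prod_mem _ ?_
    intro x hx
    obtain ⟨i, rfl⟩ := List.mem_ofFn.mp hx
    exact comm_central_of_lcs hc (X i) (hv i)
  have key : lcsT G (m+1) ≤ T := by
    rw [lcs_succ_comm]
    rw [Subgroup.commutator_le]
    intro a ha b _
    have hall : ∀ c, c ∈ Subgroup.closure (Set.range X) → ⁅a, c⁆ ∈ T := by
      intro c hcmem
      induction hcmem using Subgroup.closure_induction with
      | mem x hx =>
        obtain ⟨i, rfl⟩ := hx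
        refine ⟨fun j => if j = i then a else 1, ?_, ?_⟩
        · intro j
          show (if j = i then a else 1) ∈ lcsT G m
          by_cases hj : j = i
          · rw [if_pos hj]; exact ha
          · rw [if_neg hj]; exact Subgroup.one_mem _
        · have : (fun j => ⁅if j = i then a else 1, X j⁆) =
              fun j => if j = i then ⁅a, X i⁆ else 1 := by
            funext j
            by_cases hj : j = i
            · subst hj; rw [if_pos rfl, if_pos rfl]
            · rw [if_neg hj, if_neg hj, commutatorElement_one_left]
          show ⁅a, X i⁆ = (List.ofFn fun j => ⁅if j = i then a else 1, X j⁆).prod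
          rw [this, prod_ofFn_single]
      | one =>
        rw [commutatorElement_one_right]
        exact T.one_mem
      | mul b c _ _ hb hcm =>
        rw [comm_mul_right]
        have : b * ⁅a, c⁆ * b⁻¹ = ⁅a, c⁆ := by
          have := Subgroup.mem_center_iff.mp (hTc _ hcm) b⁻¹
          calc b * ⁅a, c⁆ * b⁻¹ = b * (⁅a, c⁆ * b⁻¹) := by rw [mul_assoc]
            _ = b * (b⁻¹ * ⁅a, c⁆) := by rw [← this]
            _ = ⁅a, c⁆ := by group
        rw [this]
        exact T.mul_mem hb hcm
      | inv b _ hb =>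
        rw [comm_inv_right]
        have := Subgroup.mem_center_iff.mp (hTc _ (T.inv_mem hb)) b⁻¹
        have h2 : b⁻¹ * ⁅a, b⁆⁻¹ * b = ⁅a, b⁆⁻¹ := by
          calc b⁻¹ * ⁅a, b⁆⁻¹ * b = b⁻¹ * (⁅a, b⁆⁻¹ * b) := by rw [mul_assoc]
            _ = b⁻¹ * (b * ⁅a, b⁆⁻¹) := by
                rw [Subgroup.mem_center_iff.mp (hTc _ (T.inv_mem hb)) b]
            _ = ⁅a, b⁆⁻¹ := by group
        rw [h2]
        exact T.inv_mem hb
    apply hall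
    rw [hX]
    exact Subgroup.mem_top b
  exact fun z hz => key hz

end LemmaB

section UpperBound
variable {G H : Type*} [Group G] [Group H] {n : ℕ}

theorem map_prod_ofFn {k : ℕ} (f : G →* H) (F : Fin k → G) :
    f ((List.ofFn F).prod) = (List.ofFn fun i => f (F i)).prod := by
  rw [map_list_prod, List.map_ofFn]
  rfl

theorem exists_word (X : Fin n → G) (hX : Subgroup.closure (Set.range X) = ⊤) (g : G) :
    ∃ w, evalWord X w = g := by
  set T : Subgroup G :=
    { carrier := {g | ∃ w, evalWord X w = g}
      one_mem' := ⟨[], rfl⟩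
      mul_mem' := by
        rintro a b ⟨w1, rfl⟩ ⟨w2, rfl⟩
        exact ⟨w1 ++ w2, evalWord_append X w1 w2⟩
      inv_mem' := by
        rintro a ⟨w, rfl⟩
        exact ⟨(w.map negL).reverse, evalWord_negL_reverse X w⟩ }
  have hle : Subgroup.closure (Set.range X) ≤ T := by
    rw [Subgroup.closure_le]
    rintro x ⟨i, rfl⟩
    exact ⟨[(i, true)], by simp [evalWord]⟩
  rw [hX] at hle
  exact hle (Subgroup.mem_top g)

theorem isPalProd_three (X : Fin n → G) (hX : Subgroup.closure (Set.range X) = ⊤)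
    (g : G) (i : Fin n) (m : ℤ) : IsPalProd X 3 (⁅g, X i⁆ * X i ^ m) := by
  obtain ⟨u, hu⟩ := exists_word X hX g
  rw [isPalProd_iff_list]
  refine ⟨[evalWord X (u ++ ([(i, true)] ++ u.reverse)),
           evalWord X (u.map negL ++ ([] ++ (u.map negL).reverse)),
           X i ^ (m - 1)], rfl, ?_, ?_⟩
  · intro p hp
    simp only [List.mem_cons, List.not_mem_nil, or_false] at hp
    rcases hp with rfl | rfl | rfl
    · exact isPalindrome_sandwich X u [(i, true)] rfl
    · exact isPalindrome_sandwich X (u.map negL) [] rfl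
    · exact isPalindrome_zpow X i (m - 1)
  · have ha : evalWord X (u.map negL) = (evalWord X u.reverse)⁻¹ := by
      have h := evalWord_negL_reverse X u.reverse
      rw [List.map_reverse, List.reverse_reverse] at h
      exact h
    have hb : evalWord X ((u.map negL).reverse) = g⁻¹ := by
      rw [evalWord_negL_reverse X u, hu]
    have h1 : evalWord X (u ++ ([(i, true)] ++ u.reverse)) =
        g * (X i * evalWord X u.reverse) := by
      rw [evalWord_append, evalWord_append, hu, evalWord_singleton]
      simp
    have h2 : evalWord X (u.map negL ++ ([] ++ (u.map negL).reverse)) =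
        (evalWord X u.reverse)⁻¹ * g⁻¹ := by
      rw [evalWord_append, evalWord_append, evalWord_nil, one_mul, ha, hb]
    rw [List.prod_cons, List.prod_cons, List.prod_cons, List.prod_nil, mul_one, h1, h2,
      commutatorElement_def]
    group

theorem lcs_quot_bot (j : ℕ) :
    lcsT (G ⧸ lcsT G j) j = ⊥ := by
  rw [← map_lcs_eq (QuotientGroup.mk' (lcsT G j))
    (QuotientGroup.mk'_surjective _) j, eq_bot_iff]
  rintro q ⟨x, hx, rfl⟩
  have : x ∈ (QuotientGroup.mk' (lcsT G j)).ker := by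
    rw [QuotientGroup.ker_mk']
    exact hx
  rw [MonoidHom.mem_ker] at this
  simp [this]

theorem S_base (X : Fin n → G) (hX : Subgroup.closure (Set.range X) = ⊤) (g : G) :
    ∃ (gs : Fin n → G) (ms : Fin n → ℤ) (z : G), z ∈ lcsT G 1 ∧
      g = (List.ofFn fun i => ⁅gs i, X i⁆ * X i ^ ms i).prod * z := by
  set π := QuotientGroup.mk' (lcsT G 1) with hπ
  set Q := G ⧸ lcsT G 1
  have hsur : Function.Surjective π := QuotientGroup.mk'_surjective _
  have hbot : lcsT Q 1 = ⊥ := lcs_quot_bot 1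
  have hcent : ∀ q : Q, q ∈ Subgroup.center Q := by
    intro q
    rw [Subgroup.mem_center_iff]
    intro w
    rw [← commutatorElement_eq_one_iff_mul_comm]
    have hmem : ⁅w, q⁆ ∈ ⁅lcsT Q 0, (⊤ : Subgroup Q)⁆ :=
      Subgroup.commutator_mem_commutator
        (by rw [Subgroup.lowerCentralSeries_zero]; exact Subgroup.mem_top w) (Subgroup.mem_top q)
    have hmem1 : ⁅w, q⁆ ∈ lcsT Q 1 := hmem
    exact Subgroup.mem_bot.mp ((le_of_eq hbot) hmem1)
  set Y := fun i => π (X i) with hY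
  have hYtop : Subgroup.closure (Set.range Y) = ⊤ := closure_range_comp X hX π hsur
  set T : Subgroup Q :=
    { carrier := {q | ∃ ms : Fin n → ℤ, q = (List.ofFn fun i => Y i ^ ms i).prod}
      one_mem' := by
        refine ⟨0, ?_⟩
        have : (fun i => Y i ^ ((0 : Fin n → ℤ) i)) = fun _ : Fin n => (1 : Q) := by
          funext i; exact zpow_zero _
        rw [this, prod_ofFn_ones]
      mul_mem' := by
        rintro a b ⟨ms, rfl⟩ ⟨ms', rfl⟩
        refine ⟨ms + ms', ?_⟩
        show _ = (List.ofFn fun i => Y i ^ (ms i + ms' i)).prod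
        have hfun : (fun i => Y i ^ (ms i + ms' i)) =
            fun i => Y i ^ ms i * Y i ^ ms' i := by
          funext i; rw [zpow_add]
        rw [hfun]
        exact prod_ofFn_mul_central n _ _ fun i => hcent _
      inv_mem' := by
        rintro a ⟨ms, rfl⟩
        refine ⟨-ms, ?_⟩
        show _ = (List.ofFn fun i => Y i ^ (-(ms i))).prod
        have hfun : (fun i => Y i ^ (-(ms i))) = fun i => (Y i ^ ms i)⁻¹ := by
          funext i; rw [zpow_neg]
        rw [hfun]
        exact prod_ofFn_inv_central n _ fun i => hcent _ }
  have hT : ∀ q : Q, q ∈ T := by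
    have hle : Subgroup.closure (Set.range Y) ≤ T := by
      rw [Subgroup.closure_le]
      rintro x ⟨j, rfl⟩
      refine ⟨fun i => if i = j then 1 else 0, ?_⟩
      have hfun : (fun i => Y i ^ (if i = j then (1 : ℤ) else 0)) =
          fun i => if i = j then Y j else 1 := by
        funext i
        by_cases hij : i = j
        · subst hij; rw [if_pos rfl, if_pos rfl, zpow_one]
        · rw [if_neg hij, if_neg hij, zpow_zero]
      show Y j = _
      rw [hfun, prod_ofFn_single]
    intro q
    rw [hYtop] at hle
    exact hle (Subgroup.mem_top q)
  obtain ⟨ms, hms⟩ := hT (π g)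
  refine ⟨fun _ => 1, ms,
    ((List.ofFn fun i => ⁅(1 : G), X i⁆ * X i ^ ms i).prod)⁻¹ * g, ?_, by group⟩
  have hker : (lcsT G 1) = π.ker := (QuotientGroup.ker_mk' _).symm
  rw [hker, MonoidHom.mem_ker, map_mul, map_inv]
  have hπs : π ((List.ofFn fun i => ⁅(1 : G), X i⁆ * X i ^ ms i).prod) = π g := by
    rw [map_prod_ofFn]
    have hfun : (fun i => π (⁅(1 : G), X i⁆ * X i ^ ms i)) = fun i => Y i ^ ms i := by
      funext i
      rw [commutatorElement_one_left, one_mul, map_zpow]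
    rw [hfun]
    exact hms.symm
  rw [hπs]
  exact inv_mul_cancel _

theorem S_step (X : Fin n → G) (hX : Subgroup.closure (Set.range X) = ⊤) (m : ℕ) (g : G)
    (prev : ∃ (gs : Fin n → G) (ms : Fin n → ℤ) (z : G), z ∈ lcsT G (m+1) ∧
      g = (List.ofFn fun i => ⁅gs i, X i⁆ * X i ^ ms i).prod * z) :
    ∃ (gs : Fin n → G) (ms : Fin n → ℤ) (z : G), z ∈ lcsT G (m+2) ∧
      g = (List.ofFn fun i => ⁅gs i, X i⁆ * X i ^ ms i).prod * z := by
  obtain ⟨gs, ms, z, hz, hg⟩ := prev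
  set π := QuotientGroup.mk' (lcsT G (m+2)) with hπ
  set Q := G ⧸ lcsT G (m+2)
  have hsur : Function.Surjective π := QuotientGroup.mk'_surjective _
  have hbot : lcsT Q (m+2) = ⊥ := lcs_quot_bot (m+2)
  have hcent : lcsT Q (m+1) ≤ Subgroup.center Q := by
    intro q hq
    rw [Subgroup.mem_center_iff]
    intro w
    have h1 : ⁅q, w⁆ ∈ ⁅lcsT Q (m+1), (⊤ : Subgroup Q)⁆ :=
      Subgroup.commutator_mem_commutator hq (Subgroup.mem_top w)
    have h2 : ⁅q, w⁆ ∈ lcsT Q (m+2) := h1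
    have h3 : ⁅q, w⁆ = 1 := Subgroup.mem_bot.mp ((le_of_eq hbot) h2)
    rw [commutatorElement_eq_one_iff_mul_comm] at h3
    exact h3.symm
  set Y := fun i => π (X i) with hYdef
  have hYtop : Subgroup.closure (Set.range Y) = ⊤ := closure_range_comp X hX π hsur
  have hzQ : π z ∈ lcsT Q (m+1) := by
    rw [← map_lcs_eq π hsur (m+1)]
    exact ⟨z, hz, rfl⟩
  obtain ⟨v, hv, hzform⟩ := lemmaB Y hYtop m hcent (π z) hzQ
  have hlift : ∀ i, ∃ x, π x = v i := fun i => hsur (v i)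
  choose u hu using hlift
  refine ⟨fun i => gs i * u i, ms,
    ((List.ofFn fun i => ⁅gs i * u i, X i⁆ * X i ^ ms i).prod)⁻¹ * g, ?_, by group⟩
  have hker : (lcsT G (m+2)) = π.ker := (QuotientGroup.ker_mk' _).symm
  rw [hker, MonoidHom.mem_ker, map_mul, map_inv]
  have hcc : ∀ i, ⁅v i, Y i⁆ ∈ Subgroup.center Q :=
    fun i => comm_central_of_lcs hcent (Y i) (hv i)
  have hπs : π ((List.ofFn fun i => ⁅gs i * u i, X i⁆ * X i ^ ms i).prod) = π g := by
    rw [map_prod_ofFn]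
    have hfun : (fun i => π (⁅gs i * u i, X i⁆ * X i ^ ms i)) =
        fun i => (⁅π (gs i), Y i⁆ * Y i ^ ms i) * ⁅v i, Y i⁆ := by
      funext i
      rw [map_mul, map_commutatorElement, map_mul, map_zpow, hu i]
      have h1 : ⁅π (gs i) * v i, Y i⁆ = ⁅v i, Y i⁆ * ⁅π (gs i), Y i⁆ :=
        comm_mul_central (v i) (π (gs i)) (Y i) (hcc i)
      rw [h1]
      have h2 := Subgroup.mem_center_iff.mp (hcc i)
      calc ⁅v i, Y i⁆ * ⁅π (gs i), Y i⁆ * Y i ^ ms i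
          = ⁅π (gs i), Y i⁆ * ⁅v i, Y i⁆ * Y i ^ ms i := by rw [← h2 ⁅π (gs i), Y i⁆]
        _ = ⁅π (gs i), Y i⁆ * (⁅v i, Y i⁆ * Y i ^ ms i) := by rw [mul_assoc]
        _ = ⁅π (gs i), Y i⁆ * (Y i ^ ms i * ⁅v i, Y i⁆) := by rw [h2 (Y i ^ ms i)]
        _ = ⁅π (gs i), Y i⁆ * Y i ^ ms i * ⁅v i, Y i⁆ := by rw [mul_assoc]
    have hfun2 : (fun i => π (⁅gs i, X i⁆ * X i ^ ms i)) =
        fun i => ⁅π (gs i), Y i⁆ * Y i ^ ms i := by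
      funext i
      simp only [hYdef]
      rw [map_mul, map_commutatorElement, map_zpow]
    rw [hfun, ← prod_ofFn_mul_central n _ _ hcc, ← hzform, hg, map_mul, map_prod_ofFn, hfun2]
  rw [hπs]
  exact inv_mul_cancel _

theorem UB_all (X : Fin n → G) (hX : Subgroup.closure (Set.range X) = ⊤)
    (R : ℕ) (hR : 1 ≤ R) (hbot : lcsT G R = ⊥) (g : G) :
    IsPalProd X (3 * n) g := by
  have hS : ∀ j, ∀ g : G, ∃ (gs : Fin n → G) (ms : Fin n → ℤ) (z : G),
      z ∈ lcsT G (j+1) ∧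
      g = (List.ofFn fun i => ⁅gs i, X i⁆ * X i ^ ms i).prod * z := by
    intro j
    induction j with
    | zero => exact S_base X hX
    | succ j ih => exact fun g => S_step X hX j g (ih g)
  obtain ⟨gs, ms, z, hz, hg⟩ := hS (R - 1) g
  have hzone : z = 1 := by
    have hRR : R - 1 + 1 = R := by omega
    rw [hRR, hbot] at hz
    exact hz
  rw [hzone, mul_one] at hg
  have h3 : ∀ p ∈ List.ofFn fun i => ⁅gs i, X i⁆ * X i ^ ms i, IsPalProd X 3 p := by
    intro p hp
    obtain ⟨i, rfl⟩ := List.mem_ofFn.mp hp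
    exact isPalProd_three X hX (gs i) i (ms i)
  have := isPalProd_of_list_three X 3 h3
  rw [List.length_ofFn] at this
  rw [hg]
  exact this

end UpperBound

/-! ### The model class-2 group for the lower bound -/

@[ext]
structure G2 (n : ℕ) where
  a : Fin n → ℤ
  b : Fin n → Fin n → ℤ

namespace G2
variable {n : ℕ}

instance : Mul (G2 n) :=
  ⟨fun g h => ⟨g.a + h.a, fun i j => g.b i j + h.b i j + (if i < j then h.a i * g.a j else 0)⟩⟩
instance : One (G2 n) := ⟨⟨0, 0⟩⟩
instance : Inv (G2 n) :=
  ⟨fun g => ⟨-g.a, fun i j => (if i < j then g.a i * g.a j else 0) - g.b i j⟩⟩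

@[simp] theorem mul_a (g h : G2 n) : (g * h).a = g.a + h.a := rfl
@[simp] theorem mul_b (g h : G2 n) (i j : Fin n) :
    (g * h).b i j = g.b i j + h.b i j + (if i < j then h.a i * g.a j else 0) := rfl
@[simp] theorem one_a : (1 : G2 n).a = 0 := rfl
@[simp] theorem one_b (i j : Fin n) : (1 : G2 n).b i j = 0 := rfl
@[simp] theorem inv_a (g : G2 n) : (g⁻¹).a = -g.a := rfl
@[simp] theorem inv_b (g : G2 n) (i j : Fin n) :
    (g⁻¹).b i j = (if i < j then g.a i * g.a j else 0) - g.b i j := rfl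

instance : Group (G2 n) := by
  refine Group.ofLeftAxioms ?_ ?_ ?_
  · intro x y z
    ext i j
    · simp [Pi.add_apply]; ring
    · simp only [mul_b, mul_a, Pi.add_apply]
      split_ifs <;> ring
  · intro x
    ext i j
    · simp
    · simp
  · intro x
    ext i j
    · simp
    · simp only [mul_b, inv_b, inv_a, one_b, Pi.neg_apply]
      split_ifs <;> ring

/-- generators -/
def gen (i : Fin n) : G2 n := ⟨Pi.single i 1, 0⟩

@[simp] theorem gen_a (i : Fin n) : (gen i).a = Pi.single i 1 := rfl
@[simp] theorem gen_b (i j k : Fin n) : (gen i).b j k = 0 := rfl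

theorem single_mul_single {i j k : Fin n} (hij : i ≠ j) :
    (Pi.single k 1 : Fin n → ℤ) i * (Pi.single k 1 : Fin n → ℤ) j = 0 := by
  simp only [Pi.single_apply]
  split_ifs with h1 h2
  · exact absurd (h1.trans h2.symm) hij
  all_goals ring

/-- the reversal anti-automorphism -/
def R (g : G2 n) : G2 n :=
  ⟨g.a, fun i j => (if i < j then g.a i * g.a j else 0) - g.b i j⟩

@[simp] theorem R_a (g : G2 n) : (R g).a = g.a := rfl
@[simp] theorem R_b (g : G2 n) (i j : Fin n) :
    (R g).b i j = (if i < j then g.a i * g.a j else 0) - g.b i j := rfl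

theorem R_mul (g h : G2 n) : R (g * h) = R h * R g := by
  ext i j
  · simp [Pi.add_apply]; ring
  · simp only [R_b, mul_b, mul_a, Pi.add_apply, R_a]
    split_ifs <;> ring

theorem R_one : R (1 : G2 n) = 1 := by
  ext i j <;> simp

theorem R_gen (i : Fin n) : R (gen i) = gen i := by
  ext p q
  · simp
  · simp only [R_b, gen_b, gen_a, sub_zero]
    split_ifs with h
    · exact single_mul_single (ne_of_lt h)
    · rfl

theorem R_inv (g : G2 n) : R g⁻¹ = (R g)⁻¹ := by
  have h : R g⁻¹ * R g = 1 := by rw [← R_mul, mul_inv_cancel, R_one]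
  exact eq_inv_of_mul_eq_one_left h

theorem evalWord_reverse (w : List (Fin n × Bool)) :
    evalWord gen w.reverse = R (evalWord gen w) := by
  induction w with
  | nil => rw [List.reverse_nil, evalWord_nil, R_one]
  | cons l t ih =>
    rw [List.reverse_cons, evalWord_append, ih, evalWord_cons, evalWord_nil, mul_one]
    have hc : evalWord gen (l :: t) = (if l.2 then gen l.1 else (gen l.1)⁻¹) * evalWord gen t :=
      evalWord_cons _ _ _
    rw [hc, R_mul]
    congr 1
    cases hl : l.2
    · simp only [Bool.false_eq_true, if_false]
      rw [R_inv, R_gen]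
    · simp only [if_true]
      rw [R_gen]

theorem pal_constraint {p : G2 n} (h : IsPalindrome gen p) :
    ∀ i j : Fin n, i < j → 2 * p.b i j = p.a i * p.a j := by
  obtain ⟨v, mid, hmidlen, hdecomp⟩ := isPalindrome_decomp h
  rw [evalWord_reverse] at hdecomp
  have hmid : ∃ c : Fin n → ℤ, (evalWord gen mid).a = c ∧
      (∀ i j, (evalWord gen mid).b i j = 0) ∧ ∀ i j : Fin n, i ≠ j → c i * c j = 0 := by
    match mid, hmidlen with
    | [], _ =>
      refine ⟨0, by simp [evalWord_nil], by simp [evalWord_nil], by simp⟩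
    | [l], _ =>
      rw [evalWord_singleton]
      cases hl : l.2
      · simp only [Bool.false_eq_true, if_false]
        refine ⟨-(Pi.single l.1 1), by simp, ?_, ?_⟩
        · intro i j
          simp only [inv_b, gen_b, gen_a, sub_zero]
          split_ifs with h
          · exact single_mul_single (ne_of_lt h)
          · rfl
        · intro i j hij
          simp only [Pi.neg_apply]
          have := single_mul_single (k := l.1) hij
          nlinarith [this]
      · simp only [if_true]
        refine ⟨Pi.single l.1 1, rfl, by simp, ?_⟩
        intro i j hij
        exact single_mul_single hij
  obtain ⟨c, hca, hcb, hcc⟩ := hmid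
  intro i j hij
  have hij' : i ≠ j := ne_of_lt hij
  rw [hdecomp]
  simp only [mul_b, mul_a, Pi.add_apply, R_a, R_b, hca, hcb, if_pos hij]
  have := hcc i j hij'
  nlinarith [this]

theorem prod_a (l : List (G2 n)) (i : Fin n) :
    (l.prod).a i = (l.map fun g => g.a i).sum := by
  induction l with
  | nil => simp
  | cons g t ih => simp [Pi.add_apply, ih]

theorem prod_b_even {i j : Fin n} (hij : i < j) : ∀ l : List (G2 n),
    (∀ g ∈ l, 2 * g.b i j = g.a i * g.a j ∧ Even (g.a i) ∧ Even (g.a j)) →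
    Even ((l.prod).a i) ∧ Even ((l.prod).a j) ∧ Even ((l.prod).b i j) := by
  intro l
  induction l with
  | nil => simp
  | cons g t ih =>
    intro hl
    obtain ⟨hgb, hgi, hgj⟩ := hl g (List.mem_cons_self)
    obtain ⟨hti, htj, htb⟩ := ih fun p hp => hl p (List.mem_cons_of_mem g hp)
    obtain ⟨s, hs⟩ := hgi
    obtain ⟨t', ht'⟩ := hgj
    have hb : g.b i j = s * t' + s * t' := by
      have h2 : (2 : ℤ) * g.b i j = 2 * (s * t' + s * t') := by
        rw [hgb, hs, ht']; ring
      exact mul_left_cancel₀ two_ne_zero h2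
    refine ⟨?_, ?_, ?_⟩
    · rw [List.prod_cons]; simp only [mul_a, Pi.add_apply]
      exact Even.add ⟨s, hs⟩ hti
    · rw [List.prod_cons]; simp only [mul_a, Pi.add_apply]
      exact Even.add ⟨t', ht'⟩ htj
    · rw [List.prod_cons]
      simp only [mul_b]
      refine Even.add (Even.add ?_ htb) ?_
      · exact ⟨s * t', hb⟩
      · rw [if_pos hij]
        exact hti.mul_right _

end G2

namespace G2
variable {n : ℕ}

theorem sum_mod_two (l : List ℤ) :
    l.sum % 2 = (l.countP (fun x => decide (x % 2 = 1)) : ℤ) % 2 := by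
  induction l with
  | nil => simp
  | cons x t ih =>
    rw [List.sum_cons, List.countP_cons]
    have h2 : x % 2 = 0 ∨ x % 2 = 1 := Int.emod_two_eq_zero_or_one x
    by_cases hx : x % 2 = 1
    · rw [if_pos (by simp [hx] : decide (x % 2 = 1) = true)]
      push_cast
      omega
    · rw [if_neg (by simp [hx] : ¬ decide (x % 2 = 1) = true)]
      push_cast
      omega

theorem countP_le_length_sum (M : Finset (Fin n)) :
    ∀ l : List (G2 n),
      (∀ g ∈ l, ∀ i j : Fin n, i < j → ¬(g.a i % 2 = 1 ∧ g.a j % 2 = 1)) →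
      (∑ i ∈ M, l.countP (fun g => decide (g.a i % 2 = 1))) ≤ l.length := by
  intro l
  induction l with
  | nil => simp
  | cons g t ih =>
    intro hl
    have ht := ih fun p hp => hl p (List.mem_cons_of_mem g hp)
    have hg := hl g (List.mem_cons_self)
    simp only [List.countP_cons, List.length_cons]
    rw [Finset.sum_add_distrib]
    have hcard : (∑ i ∈ M, if (decide ((g.a i) % 2 = 1)) = true then 1 else 0) ≤ 1 := by
      rw [← Finset.card_filter]
      apply Finset.card_le_one.mpr
      intro p hp q hq
      rw [Finset.mem_filter] at hp hq
      have hp2 : g.a p % 2 = 1 := by simpa using hp.2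
      have hq2 : g.a q % 2 = 1 := by simpa using hq.2
      by_contra hne
      rcases lt_trichotomy p q with h | h | h
      · exact hg p q h ⟨hp2, hq2⟩
      · exact hne h
      · exact hg q p h ⟨hq2, hp2⟩
    omega

theorem LB_core (hn : 2 ≤ n) (l : List (G2 n))
    (hpal : ∀ p ∈ l, IsPalindrome gen p)
    (ha : (l.prod).a = 0)
    (hb : ∀ i j : Fin n, i < j → (l.prod).b i j % 2 = 1) :
    2 * (n - 1) ≤ l.length := by
  classical
  have hone : ∀ g ∈ l, ∀ i j : Fin n, i < j → ¬(g.a i % 2 = 1 ∧ g.a j % 2 = 1) := by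
    rintro g hg i j hij ⟨h1, h2⟩
    have hc := pal_constraint (hpal g hg) i j hij
    have hodd : (g.a i * g.a j) % 2 = 1 :=
      Int.odd_iff.mp ((Int.odd_iff.mpr h1).mul (Int.odd_iff.mpr h2))
    omega
  set M : Finset (Fin n) := Finset.univ.filter (fun i => ∃ g ∈ l, g.a i % 2 = 1) with hM
  set cnt : Fin n → ℕ := fun i => l.countP (fun g => decide (g.a i % 2 = 1)) with hcnt
  have hcnt_even : ∀ i, (cnt i : ℤ) % 2 = 0 := by
    intro i
    have hsum : (l.map fun g => g.a i).sum = 0 := by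
      rw [← prod_a, ha]
      rfl
    have hmt := sum_mod_two (l.map fun g => g.a i)
    rw [hsum, List.countP_map] at hmt
    have : l.countP ((fun x => decide (x % 2 = 1)) ∘ fun g => g.a i) = cnt i := rfl
    rw [this] at hmt
    omega
  have hcnt2 : ∀ i ∈ M, 2 ≤ cnt i := by
    intro i hi
    rw [hM, Finset.mem_filter] at hi
    obtain ⟨-, g, hgl, hodd⟩ := hi
    have hpos : 0 < cnt i := by
      rw [hcnt]
      rw [List.countP_pos_iff]
      exact ⟨g, hgl, by simpa using hodd⟩
    have := hcnt_even i
    omega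
  have hnotM : ∀ p : Fin n, p ∉ M → ∀ g ∈ l, g.a p % 2 = 0 := by
    intro p hp g hgl
    rw [hM, Finset.mem_filter] at hp
    push_neg at hp
    have := hp (Finset.mem_univ p) g hgl
    have h2 := Int.emod_two_eq_zero_or_one (g.a p)
    omega
  have hMcard : n - 1 ≤ M.card := by
    by_contra hlt
    push_neg at hlt
    have hcardn : Fintype.card (Fin n) = n := Fintype.card_fin n
    have hMle : M.card ≤ Fintype.card (Fin n) := Finset.card_le_univ M
    have hcompl : 1 < Mᶜ.card := by
      rw [Finset.card_compl]
      omega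
    obtain ⟨i, hi, j, hj, hij⟩ := Finset.one_lt_card.mp hcompl
    rw [Finset.mem_compl] at hi hj
    have key : ∀ p q : Fin n, p < q → p ∉ M → q ∉ M → False := by
      intro p q hpq hp hq
      have heven := (prod_b_even hpq l ?_).2.2
      · rw [Int.even_iff] at heven
        have := hb p q hpq
        omega
      · intro g hgl
        refine ⟨pal_constraint (hpal g hgl) p q hpq, ?_, ?_⟩
        · exact Int.even_iff.mpr (hnotM p hp g hgl)
        · exact Int.even_iff.mpr (hnotM q hq g hgl)
    rcases lt_trichotomy i j with h | h | h
    · exact key i j h hi hj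
    · exact hij h
    · exact key j i h hj hi
  have hsum_le := countP_le_length_sum M l hone
  have hsum_ge : M.card • 2 ≤ ∑ i ∈ M, cnt i := Finset.card_nsmul_le_sum M cnt 2 hcnt2
  have : (∑ i ∈ M, l.countP (fun g => decide (g.a i % 2 = 1))) = ∑ i ∈ M, cnt i := rfl
  rw [this] at hsum_le
  have hsmul : M.card • 2 = 2 * M.card := by rw [smul_eq_mul]; ring
  omega

end G2

/-- The free nilpotent group `N_{n,r}` of rank `n` and step `r`: the quotient of the free
group on `n` generators by `γ_{r+1} = lcsT _ r` (indices: `γ_1` is the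
whole group and corresponds to index `0`). -/
abbrev FreeNilpotent (n r : ℕ) :=
  FreeGroup (Fin n) ⧸ (⊤ : Subgroup (FreeGroup (Fin n))).lowerCentralSeries r

/-- The images `x_1, …, x_n` of the free basis in `N_{n,r}`. -/
def nilGen (n r : ℕ) (i : Fin n) : FreeNilpotent n r :=
  QuotientGroup.mk (FreeGroup.of i)

section Assembly

theorem map_lcs_le {G H : Type*} [Group G] [Group H] (f : G →* H) :
    ∀ k, (lcsT G k).map f ≤ lcsT H k := by
  intro k
  induction k with
  | zero => rw [Subgroup.lowerCentralSeries_zero]; exact le_top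
  | succ k ih =>
    rw [lcs_succ_comm, lcs_succ_comm, Subgroup.map_commutator]
    exact Subgroup.commutator_mono ih le_top

namespace G2
variable {n : ℕ}

theorem central_of_a_zero (p : G2 n) (hp : p.a = 0) : p ∈ Subgroup.center (G2 n) := by
  rw [Subgroup.mem_center_iff]
  intro q
  ext i j
  · simp [hp]
  · simp only [mul_b, hp, Pi.zero_apply, zero_mul, mul_zero, ite_self]
    ring

theorem comm_a_zero (g h : G2 n) : (⁅g, h⁆ : G2 n).a = 0 := by
  rw [commutatorElement_def]
  funext i
  simp only [mul_a, inv_a, Pi.add_apply, Pi.neg_apply, Pi.zero_apply]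
  ring

theorem lcs_G2_bot {j : ℕ} (hj : 2 ≤ j) : lcsT (G2 n) j = ⊥ := by
  have h1 : lcsT (G2 n) 1 ≤ Subgroup.center (G2 n) := by
    have h : (⁅lcsT (G2 n) 0, (⊤ : Subgroup (G2 n))⁆) ≤ Subgroup.center (G2 n) :=
      Subgroup.commutator_le.mpr fun g1 _ g2 _ => central_of_a_zero _ (comm_a_zero g1 g2)
    exact h
  have h2 : lcsT (G2 n) 2 = ⊥ := by
    rw [eq_bot_iff]
    have h : (⁅lcsT (G2 n) 1, (⊤ : Subgroup (G2 n))⁆) ≤ ⊥ := by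
      refine Subgroup.commutator_le.mpr fun g1 hg1 g2 _ => ?_
      rw [Subgroup.mem_bot, commutatorElement_eq_one_iff_mul_comm]
      exact (Subgroup.mem_center_iff.mp (h1 hg1) g2).symm
    exact h
  rw [eq_bot_iff, ← h2]
  exact Subgroup.lowerCentralSeries_antitone ⊤ hj

theorem comm_b (g h : G2 n) (p q : Fin n) :
    (⁅g, h⁆ : G2 n).b p q = if p < q then h.a p * g.a q - g.a p * h.a q else 0 := by
  rw [commutatorElement_def]
  simp only [mul_b, mul_a, inv_b, inv_a, Pi.add_apply, Pi.neg_apply]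
  split_ifs <;> ring

theorem comm_gen_val {i j p q : Fin n} (hij : i < j) (hpq : p < q) :
    (Pi.single i 1 : Fin n → ℤ) p * (Pi.single j 1 : Fin n → ℤ) q -
      (Pi.single j 1 : Fin n → ℤ) p * (Pi.single i 1 : Fin n → ℤ) q
      = if (i, j) = (p, q) then 1 else 0 := by
  by_cases h1 : (i, j) = (p, q)
  · obtain ⟨hip, hjq⟩ := Prod.ext_iff.mp h1
    subst hip; subst hjq
    rw [if_pos rfl]
    rw [Pi.single_eq_same, Pi.single_eq_same,
      Pi.single_apply, if_neg (ne_of_lt hij), Pi.single_apply, if_neg (ne_of_gt hij)]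
    ring
  · rw [if_neg h1]
    have hA : (Pi.single i 1 : Fin n → ℤ) p * (Pi.single j 1 : Fin n → ℤ) q = 0 := by
      by_cases hp : p = i
      · by_cases hq : q = j
        · exact absurd (by rw [hp, hq]) h1
        · rw [Pi.single_eq_of_ne hq, mul_zero]
      · rw [Pi.single_eq_of_ne hp, zero_mul]
    have hB : (Pi.single j 1 : Fin n → ℤ) p * (Pi.single i 1 : Fin n → ℤ) q = 0 := by
      by_cases hp : p = j
      · by_cases hq : q = i
        · rw [hp, hq] at hpq
          exact absurd hij (lt_asymm hpq)
        · rw [Pi.single_eq_of_ne hq, mul_zero]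
      · rw [Pi.single_eq_of_ne hp, zero_mul]
    rw [hA, hB]
    ring

theorem prod_a0 : ∀ l : List (G2 n), (∀ g ∈ l, g.a = 0) →
    (l.prod).a = 0 ∧ ∀ p q : Fin n, (l.prod).b p q = (l.map fun g => g.b p q).sum := by
  intro l
  induction l with
  | nil => exact fun _ => ⟨rfl, fun p q => by simp⟩
  | cons g t ih =>
    intro h
    obtain ⟨hta, htb⟩ := ih fun p hp => h p (List.mem_cons_of_mem g hp)
    have hga := h g (List.mem_cons_self)
    constructor
    · rw [List.prod_cons, mul_a, hga, hta, add_zero]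
    · intro p q
      rw [List.prod_cons, mul_b, List.map_cons, List.sum_cons, htb p q, hga]
      simp

end G2

theorem list_sum_indicator {α : Type*} [DecidableEq α] :
    ∀ (l : List α), l.Nodup → ∀ e : α,
      (l.map fun x => if x = e then (1 : ℤ) else 0).sum = if e ∈ l then 1 else 0 := by
  intro l
  induction l with
  | nil => simp
  | cons a t ih =>
    intro hnodup e
    obtain ⟨ha, ht⟩ := List.nodup_cons.mp hnodup
    rw [List.map_cons, List.sum_cons, ih ht e]
    by_cases hae : a = e
    · subst hae
      rw [if_pos rfl, if_neg ha, if_pos (List.mem_cons_self), add_zero]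
    · have hmem : e ∈ a :: t ↔ e ∈ t := by
        rw [List.mem_cons]
        exact or_iff_right fun h => hae h.symm
      rw [if_neg hae, zero_add, if_congr hmem rfl rfl]

/-- the list of ordered pairs -/
def plist (n : ℕ) : List (Fin n × Fin n) :=
  ((List.finRange n) ×ˢ (List.finRange n)).filter (fun p => p.1 < p.2)

theorem mem_plist {n : ℕ} {p : Fin n × Fin n} : p ∈ plist n ↔ p.1 < p.2 := by
  obtain ⟨a, b⟩ := p
  simp [plist, List.mem_filter, List.mem_product]

theorem nodup_plist (n : ℕ) : (plist n).Nodup :=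
  ((List.nodup_finRange n).product (List.nodup_finRange n)).filter _

theorem gamma_b {n : ℕ} {p q : Fin n} (hpq : p < q) :
    (((plist n).map fun e => (⁅G2.gen e.2, G2.gen e.1⁆ : G2 n)).prod).b p q = 1 := by
  have hmap := (G2.prod_a0 ((plist n).map fun e => (⁅G2.gen e.2, G2.gen e.1⁆ : G2 n))
    (by
      intro g hg
      obtain ⟨e, he, rfl⟩ := List.mem_map.mp hg
      exact G2.comm_a_zero _ _)).2 p q
  rw [hmap, List.map_map]
  have hcongr : (plist n).map ((fun g : G2 n => g.b p q) ∘ fun e => ⁅G2.gen e.2, G2.gen e.1⁆)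
      = (plist n).map fun e => if e = (p, q) then (1 : ℤ) else 0 := by
    apply List.map_congr_left
    rintro ⟨e1, e2⟩ he
    have hij : e1 < e2 := mem_plist.mp he
    show (⁅G2.gen e2, G2.gen e1⁆ : G2 n).b p q = _
    rw [G2.comm_b, if_pos hpq]
    simp only [G2.gen_a]
    exact G2.comm_gen_val hij hpq
  rw [hcongr, list_sum_indicator (plist n) (nodup_plist n) (p, q),
    if_pos (mem_plist.mpr hpq)]

theorem gamma_a {n : ℕ} :
    (((plist n).map fun e => (⁅G2.gen e.2, G2.gen e.1⁆ : G2 n)).prod).a = 0 := by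
  refine (G2.prod_a0 _ ?_).1
  intro g hg
  obtain ⟨e, he, rfl⟩ := List.mem_map.mp hg
  exact G2.comm_a_zero _ _

end Assembly


/-- For `n ≥ 2` and `r ≥ 3`, `2(n-1) ≤ pw(N_{n,r}, X) ≤ 3n`. -/
theorem pw_freeNilpotent_bounds (n r : ℕ) (hn : 2 ≤ n) (hr : 3 ≤ r) :
    ((2 * (n - 1) : ℕ) : ℕ∞) ≤ palWidth (nilGen n r) ∧
      palWidth (nilGen n r) ≤ ((3 * n : ℕ) : ℕ∞) := by
  have hXtop : Subgroup.closure (Set.range (nilGen n r)) = ⊤ := by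
    have h := closure_range_comp FreeGroup.of (FreeGroup.closure_range_of (Fin n))
      (QuotientGroup.mk' (lcsT (FreeGroup (Fin n)) r))
      (QuotientGroup.mk'_surjective _)
    have heq : (fun i => (QuotientGroup.mk' (lcsT (FreeGroup (Fin n)) r))
        (FreeGroup.of i)) = nilGen n r := rfl
    rw [heq] at h
    exact h
  constructor
  · -- lower bound
    have hker : lcsT (FreeGroup (Fin n)) r ≤ (FreeGroup.lift G2.gen :
        FreeGroup (Fin n) →* G2 n).ker := by
      intro x hx
      have hmem : (FreeGroup.lift G2.gen) x ∈ lcsT (G2 n) r :=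
        map_lcs_le (FreeGroup.lift G2.gen) r ⟨x, hx, rfl⟩
      rw [G2.lcs_G2_bot (by omega)] at hmem
      rw [MonoidHom.mem_ker]
      exact hmem
    set φ : FreeNilpotent n r →* G2 n :=
      QuotientGroup.lift (lcsT (FreeGroup (Fin n)) r)
        (FreeGroup.lift G2.gen) hker with hφ
    have hφgen : ∀ i, φ (nilGen n r i) = G2.gen i := by
      intro i
      rw [hφ]
      show QuotientGroup.lift _ _ hker ((QuotientGroup.mk (FreeGroup.of i))) = _
      rw [QuotientGroup.lift_mk]
      exact FreeGroup.lift_apply_of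
    set gN : FreeNilpotent n r :=
      ((plist n).map fun e => ⁅nilGen n r e.2, nilGen n r e.1⁆).prod with hgN
    have hφgN : φ gN = ((plist n).map fun e => (⁅G2.gen e.2, G2.gen e.1⁆ : G2 n)).prod := by
      rw [hgN, map_list_prod, List.map_map]
      congr 1
      apply List.map_congr_left
      intro e _
      show φ ⁅nilGen n r e.2, nilGen n r e.1⁆ = _
      rw [map_commutatorElement, hφgen, hφgen]
    have hcore : ∀ k, IsPalProd (nilGen n r) k gN → 2 * (n - 1) ≤ k := by
      intro k hk
      have hk2 := hk.map φ
      rw [show (fun i => φ (nilGen n r i)) = G2.gen from funext hφgen] at hk2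
      obtain ⟨l, hlen, hpal, hprod⟩ := (isPalProd_iff_list G2.gen).mp hk2
      rw [← hlen]
      refine G2.LB_core hn l hpal ?_ ?_
      · rw [hprod, hφgN]
        exact gamma_a
      · intro i j hij
        rw [hprod, hφgN, gamma_b hij]
        norm_num
    calc ((2 * (n - 1) : ℕ) : ℕ∞) ≤ palLength (nilGen n r) gN :=
          le_palLength (nilGen n r) hcore
      _ ≤ palWidth (nilGen n r) := palLength_le_palWidth _ gN
  · -- upper bound
    have hbotN : lcsT (FreeNilpotent n r) r = ⊥ := lcs_quot_bot r
    refine iSup_le fun g => ?_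
    exact palLength_le (nilGen n r) (UB_all (nilGen n r) hXtop r (by omega) hbotN g)
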